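/- For α = 0, the fixed point θ = π/2 of the reduced system for the rolling ellipsoid of revolution is linearly stable if and only if |κ| < κ_c = √((β²−1)/β) (for β > 1; for β ≤ 1 it is stable for all κ). Equivalently: the sign condition G₀′(π/2) < 0 holds iff κ² < (β²−1)/β, where G₀(θ) = κ² cos θ/sin³θ − U′(θ), U(θ) = Z(θ) = √(β² sin²θ + cos²θ). -/

import Mathlib

open Real

/-- For the balanced ellipsoid (α = 0), with `U(θ) = Z(θ) = √(β² sin²θ + cos²θ)`
and `G₀(θ) = κ² cos θ/sin³θ − U′(θ)`, one has the identity
`G₀′(π/2) = −κ² + (β²−1)/β`, and hence the linear-stability condition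
`G₀′(π/2) < 0 ⟺ κ² > (β²−1)/β`. -/
theorem equator_rotation_stability (β κ : ℝ) (hβ : 0 < β)
    (U G₀ : ℝ → ℝ)
    (hU : ∀ θ : ℝ, U θ = Real.sqrt (β ^ 2 * Real.sin θ ^ 2 + Real.cos θ ^ 2))
    (hG₀ : ∀ θ : ℝ, G₀ θ = κ ^ 2 * Real.cos θ / Real.sin θ ^ 3 - deriv U θ) :
    deriv G₀ (π / 2) = -κ ^ 2 + (β ^ 2 - 1) / β ∧
      (deriv G₀ (π / 2) < 0 ↔ (β ^ 2 - 1) / β < κ ^ 2) := by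
  set f : ℝ → ℝ := fun θ => β ^ 2 * Real.sin θ ^ 2 + Real.cos θ ^ 2 with hf
  have hfpos : ∀ θ : ℝ, 0 < f θ := by
    intro θ
    have hsc := Real.sin_sq_add_cos_sq θ
    simp only [hf]
    rcases le_or_gt 1 (β ^ 2) with h | h
    · nlinarith [sq_nonneg (Real.sin θ)]
    · nlinarith [sq_nonneg (Real.cos θ), pow_pos hβ 2]
  have hfda : ∀ θ : ℝ, HasDerivAt f (2 * (β ^ 2 - 1) * Real.sin θ * Real.cos θ) θ := by
    intro θ
    have h1 := (Real.hasDerivAt_sin θ).pow 2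
    have h2 := (Real.hasDerivAt_cos θ).pow 2
    have := (h1.const_mul (β ^ 2)).add h2
    refine this.congr_deriv ?_
    ring
  have hUd : ∀ θ : ℝ, HasDerivAt U
      ((β ^ 2 - 1) * Real.sin θ * Real.cos θ / Real.sqrt (f θ)) θ := by
    intro θ
    have hs : Real.sqrt (f θ) ≠ 0 := (Real.sqrt_pos.mpr (hfpos θ)).ne'
    have h := (hfda θ).sqrt (hfpos θ).ne'
    have hUeq : U = fun θ => Real.sqrt (f θ) := funext hU
    rw [hUeq]
    convert h using 1
    field_simp
  have hG' : G₀ = fun θ =>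
      κ ^ 2 * Real.cos θ / Real.sin θ ^ 3 -
        (β ^ 2 - 1) * Real.sin θ * Real.cos θ / Real.sqrt (f θ) := by
    funext θ
    rw [hG₀, (hUd θ).deriv]
  set x : ℝ := π / 2 with hx
  have hsin : Real.sin x = 1 := Real.sin_pi_div_two
  have hcos : Real.cos x = 0 := Real.cos_pi_div_two
  have hfx : f x = β ^ 2 := by simp [hf, hsin, hcos]
  have hsq : Real.sqrt (f x) = β := by
    rw [hfx, Real.sqrt_sq hβ.le]
  -- first term
  have h1 : HasDerivAt (fun θ => κ ^ 2 * Real.cos θ / Real.sin θ ^ 3)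
      ((κ ^ 2 * (-Real.sin x) * Real.sin x ^ 3 -
        κ ^ 2 * Real.cos x * ((3 : ℕ) * Real.sin x ^ 2 * Real.cos x)) /
        (Real.sin x ^ 3) ^ 2) x := by
    exact ((Real.hasDerivAt_cos x).const_mul (κ ^ 2)).div
      ((Real.hasDerivAt_sin x).pow 3) (by rw [hsin]; norm_num)
  have h2 : HasDerivAt (fun θ => (β ^ 2 - 1) * Real.sin θ * Real.cos θ / Real.sqrt (f θ))
      (((β ^ 2 - 1) * (Real.cos x * Real.cos x + Real.sin x * (-Real.sin x)) *
        Real.sqrt (f x) -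
        (β ^ 2 - 1) * Real.sin x * Real.cos x *
          (2 * (β ^ 2 - 1) * Real.sin x * Real.cos x / (2 * Real.sqrt (f x)))) /
        (Real.sqrt (f x)) ^ 2) x := by
    have hnum : HasDerivAt (fun θ => (β ^ 2 - 1) * Real.sin θ * Real.cos θ)
        ((β ^ 2 - 1) * (Real.cos x * Real.cos x + Real.sin x * (-Real.sin x))) x := by
      have h := ((Real.hasDerivAt_sin x).mul (Real.hasDerivAt_cos x)).const_mul (β ^ 2 - 1)
      have hfun : (fun θ : ℝ => (β ^ 2 - 1) * Real.sin θ * Real.cos θ)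
          = fun θ : ℝ => (β ^ 2 - 1) * (Real.sin θ * Real.cos θ) := by
        funext θ; ring
      rw [hfun]
      exact h
    have hden := (hfda x).sqrt (hfpos x).ne'
    exact hnum.div hden (by rw [hsq]; exact hβ.ne')
  have hder : HasDerivAt G₀ (-κ ^ 2 + (β ^ 2 - 1) / β) x := by
    rw [hG']
    have := h1.sub h2
    refine this.congr_deriv ?_
    rw [hsin, hcos, hsq]
    push_cast
    field_simp
    ring
  refine ⟨hder.deriv, ?_⟩
  rw [hder.deriv]
  constructor <;> intro h <;> linarith
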